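/- Let 0 < α < 1/2 and set γ(α) = α/(2α−1) and z(y,α) = y²(2α−1)/2. Then lim_{y → 0⁺} [ α·y²·W(γ(α)+1, 5/2, z(y,α)) + W(γ(α), 3/2, z(y,α)) ] = Γ(3/2 − γ(α)) / Γ(3/2). -/

import Mathlib

open Real Filter Polynomial
open Topology

/-- Confluent hypergeometric function of the first kind,
`M(γ,β,z) = ∑ (γ)⁽ⁿ⁾ zⁿ / ((β)⁽ⁿ⁾ n!)`. -/
noncomputable def M (γ β z : ℝ) : ℝ :=
  ∑' n : ℕ, ((ascPochhammer ℝ n).eval γ * z ^ n) /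
    ((ascPochhammer ℝ n).eval β * (Nat.factorial n : ℝ))

/-- The solution `W(γ,β,z)` of Kummer's equation used for `z < 0`. -/
noncomputable def W (γ β z : ℝ) : ℝ :=
  Real.Gamma (β - γ) / Real.Gamma β * M γ β z -
    Real.Gamma (1 - γ) / Real.Gamma (2 - β) * (-z) ^ (1 - β) * M (γ - β + 1) (2 - β) z


namespace Stmt17Aux

noncomputable def trm (γ β z : ℝ) (k n : ℕ) : ℝ :=
  ((ascPochhammer ℝ (n + k)).eval γ * z ^ n) /
    ((ascPochhammer ℝ (n + k)).eval β * (Nat.factorial (n + k) : ℝ))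

lemma trm_succ (γ β z : ℝ) (k n : ℕ) :
    trm γ β z k (n + 1) =
      trm γ β z k n *
        ((γ + ((n + k : ℕ) : ℝ)) * z / ((β + ((n + k : ℕ) : ℝ)) * (((n + k : ℕ) : ℝ) + 1))) := by
  have h1 : n + 1 + k = (n + k) + 1 := by omega
  rw [trm, trm, h1, ascPochhammer_succ_right]
  simp only [Polynomial.eval_mul, Polynomial.eval_add, Polynomial.eval_X,
    Polynomial.eval_natCast, Nat.factorial_succ]
  rw [div_mul_div_comm]
  push_cast
  congr 1 <;> ring

lemma summable_trm (γ β z : ℝ) (k : ℕ) : Summable (trm γ β z k) := by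
  apply summable_of_ratio_norm_eventually_le (r := 1/2) (by norm_num)
  have h := tendsto_natCast_atTop_atTop (R := ℝ)
  filter_upwards [h.eventually_ge_atTop (|γ| + 4*|β| + 8*|z| + 8)] with n hn
  set m : ℝ := ((n + k : ℕ) : ℝ) with hm
  have hnm : (n : ℝ) ≤ m := by rw [hm]; exact_mod_cast Nat.le_add_right n k
  have hm1 : |γ| + 4*|β| + 8*|z| + 8 ≤ m := le_trans hn hnm
  have hβm : 0 < β + m := by
    have := neg_abs_le β
    have := abs_nonneg γ; have := abs_nonneg z; have := abs_nonneg β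
    linarith
  have hm0 : (0:ℝ) ≤ m := by positivity
  rw [trm_succ, norm_mul, Real.norm_eq_abs, Real.norm_eq_abs, abs_div, abs_mul, abs_mul]
  have hq : |γ + m| * |z| / (|β + m| * |m + 1|) ≤ 1/2 := by
    rw [abs_of_pos hβm, abs_of_pos (by linarith : (0:ℝ) < m + 1)]
    rw [div_le_iff₀ (by positivity)]
    have h2 : |γ + m| ≤ |γ| + m := by
      calc |γ + m| ≤ |γ| + |m| := abs_add_le _ _
        _ = |γ| + m := by rw [abs_of_nonneg hm0]
    nlinarith [abs_nonneg z, abs_nonneg γ, abs_nonneg β,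
      mul_nonneg (abs_nonneg z) (by linarith [abs_nonneg β, abs_nonneg z] : (0:ℝ) ≤ m - |γ|),
      mul_nonneg (sub_nonneg.2 h2) (abs_nonneg z),
      mul_nonneg (by linarith [abs_nonneg γ, abs_nonneg β, abs_nonneg z] : (0:ℝ) ≤ m - 2*|β|)
        (by linarith [abs_nonneg γ, abs_nonneg β] : (0:ℝ) ≤ m + 1 - 8*|z|),
      mul_nonneg (by linarith [neg_abs_le β] : (0:ℝ) ≤ β + |β|) (by linarith : (0:ℝ) ≤ m + 1),
      mul_nonneg (abs_nonneg β) (by linarith : (0:ℝ) ≤ m + 1),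
      mul_nonneg (abs_nonneg z) (by linarith [abs_nonneg γ, abs_nonneg z] : (0:ℝ) ≤ m - 4*|β|)]
  calc |trm γ β z k n| * (|γ + m| * |z| / (|β + m| * |m + 1|))
      ≤ |trm γ β z k n| * (1/2) := mul_le_mul_of_nonneg_left hq (abs_nonneg _)
    _ = 1/2 * |trm γ β z k n| := mul_comm _ _

noncomputable def T (γ β z : ℝ) : ℝ := ∑' n, trm γ β z 1 n

noncomputable def Tb (γ β : ℝ) : ℝ := ∑' n, |trm γ β 1 1 n|

lemma Tb_nonneg (γ β : ℝ) : 0 ≤ Tb γ β := tsum_nonneg fun n => abs_nonneg _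

lemma M_eq (γ β z : ℝ) : M γ β z = 1 + z * T γ β z := by
  have h0 : (fun n : ℕ => ((ascPochhammer ℝ n).eval γ * z ^ n) /
      ((ascPochhammer ℝ n).eval β * (Nat.factorial n : ℝ))) = trm γ β z 0 := by
    funext n; simp [trm]
  rw [M, h0, Summable.tsum_eq_zero_add (summable_trm γ β z 0)]
  have ht0 : trm γ β z 0 0 = 1 := by simp [trm]
  have hshift : ∀ n : ℕ, trm γ β z 0 (n + 1) = z * trm γ β z 1 n := by
    intro n
    unfold trm
    simp only [Nat.add_zero]
    ring
  rw [ht0, tsum_congr hshift, tsum_mul_left, T]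

lemma abs_T_le (γ β z : ℝ) (hz : |z| ≤ 1) : |T γ β z| ≤ Tb γ β := by
  have h1 := (summable_trm γ β z 1).abs
  have h2 := (summable_trm γ β 1 1).abs
  have hb : ∀ n, |trm γ β z 1 n| ≤ |trm γ β 1 1 n| := by
    intro n
    have he : trm γ β z 1 n = trm γ β 1 1 n * z ^ n := by
      unfold trm; rw [one_pow]; ring
    rw [he, abs_mul, abs_pow]
    exact mul_le_of_le_one_right (abs_nonneg _) (pow_le_one₀ (abs_nonneg z) hz)
  calc |T γ β z| ≤ ∑' n, |trm γ β z 1 n| := by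
        simpa [Real.norm_eq_abs, T] using
          norm_tsum_le_tsum_norm (f := trm γ β z 1) (by simpa [Real.norm_eq_abs] using h1)
    _ ≤ Tb γ β := Summable.tsum_le_tsum hb h1 h2

end Stmt17Aux

open Stmt17Aux

theorem stmt_17 (α : ℝ) (hα : 0 < α) (hα' : α < 1 / 2) :
    Tendsto
      (fun y : ℝ =>
        α * y ^ 2 * W (α / (2 * α - 1) + 1) (5 / 2) (y ^ 2 * (2 * α - 1) / 2) +
          W (α / (2 * α - 1)) (3 / 2) (y ^ 2 * (2 * α - 1) / 2))
      (nhdsWithin 0 (Set.Ioi (0 : ℝ)))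
      (nhds (Real.Gamma (3 / 2 - α / (2 * α - 1)) / Real.Gamma (3 / 2))) := by
  have hden : 2 * α - 1 < 0 := by linarith
  have hdenne : 2 * α - 1 ≠ 0 := ne_of_lt hden
  set γ : ℝ := α / (2 * α - 1) with hγdef
  have hγneg : γ < 0 := div_neg_of_pos_of_neg hα hden
  set u : ℝ := Real.sqrt ((1 - 2 * α) / 2) with hudef
  have hc : (0:ℝ) < (1 - 2 * α) / 2 := by linarith
  have hu : 0 < u := Real.sqrt_pos.mpr hc
  have hu2 : u ^ 2 = (1 - 2 * α) / 2 := Real.sq_sqrt hc.le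
  have hu1 : u ≤ 1 := by nlinarith [sq_nonneg (u - 1)]
  have hαu : α = -2 * γ * u ^ 2 := by
    rw [hu2, hγdef, show -2 * (α / (2 * α - 1)) * ((1 - 2 * α) / 2) = α / (2 * α - 1) * (2 * α - 1) by ring, div_mul_cancel₀ α hdenne]
  have hπ : Real.sqrt π ≠ 0 := by
    have := Real.pi_pos; positivity
  have hΓ32 : (0:ℝ) < Real.Gamma (3 / 2) := Real.Gamma_pos_of_pos (by norm_num)
  have hΓ52 : (0:ℝ) < Real.Gamma (5 / 2) := Real.Gamma_pos_of_pos (by norm_num)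
  have hΓm : Real.Gamma (-(1 / 2)) = -2 * Real.sqrt π := by
    have h := Real.Gamma_add_one (show (-(1 / 2) : ℝ) ≠ 0 by norm_num)
    rw [show (-(1 / 2) + 1 : ℝ) = 1 / 2 by norm_num, Real.Gamma_one_half_eq] at h
    linarith
  have hΓγ : Real.Gamma (1 - γ) = -γ * Real.Gamma (-γ) := by
    have h := Real.Gamma_add_one (show (-γ : ℝ) ≠ 0 by linarith)
    rw [show (-γ + 1 : ℝ) = 1 - γ by ring] at h
    rw [h]
  have hmem : Set.Ioo (0:ℝ) 1 ∈ nhdsWithin (0:ℝ) (Set.Ioi 0) :=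
    Ioo_mem_nhdsGT_of_mem (by norm_num : (0:ℝ) ∈ Set.Ico (0:ℝ) 1)
  have hCy : ∀ C : ℝ, Tendsto (fun y : ℝ => C * y) (nhdsWithin 0 (Set.Ioi 0)) (𝓝 0) := by
    intro C
    have h : Tendsto (fun y : ℝ => C * y) (𝓝 0) (𝓝 (C * 0)) :=
      (continuous_const.mul continuous_id).tendsto 0
    rw [mul_zero] at h
    exact h.mono_left nhdsWithin_le_nhds
  -- basic facts for y ∈ Ioo 0 1
  have hyfacts : ∀ y : ℝ, y ∈ Set.Ioo (0:ℝ) 1 →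
      0 ≤ y * u ∧ (y*u)^2 ≤ y ∧ |(-((y*u)^2))| ≤ 1 ∧ y * u ≤ y := by
    intro y hy
    obtain ⟨hy0, hy1⟩ := hy
    have h1 : 0 ≤ y * u := by positivity
    have h2 : y * u ≤ y := by nlinarith
    have h3 : (y*u)^2 ≤ y := by nlinarith
    have h4 : |(-((y*u)^2))| ≤ 1 := by
      rw [abs_neg, abs_of_nonneg (sq_nonneg _)]; nlinarith
    exact ⟨h1, h3, h4, h2⟩
  have hg1 : Tendsto (fun y : ℝ => (y*u)^2 * (1 - (y*u)^2 * T (γ+1) (5/2) (-((y*u)^2))))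
      (nhdsWithin 0 (Set.Ioi 0)) (𝓝 0) := by
    apply squeeze_zero_norm' _ (hCy (1 + Tb (γ+1) (5/2)))
    filter_upwards [hmem] with y hy
    obtain ⟨h1, h3, h4, h2⟩ := hyfacts y hy
    have hT := abs_T_le (γ+1) (5/2) _ h4
    have hC : 0 ≤ Tb (γ+1) (5/2) := Tb_nonneg _ _
    rw [Real.norm_eq_abs, abs_mul, abs_pow, sq_abs]
    have h5 : |1 - (y*u)^2 * T (γ+1) (5/2) (-((y*u)^2))| ≤ 1 + Tb (γ+1) (5/2) := by
      have h6 : |(y*u)^2 * T (γ+1) (5/2) (-((y*u)^2))| ≤ Tb (γ+1) (5/2) := by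
        rw [abs_mul, abs_pow, sq_abs]
        have hle1 : (y*u)^2 ≤ 1 := by
          have := hy.2; nlinarith [hy.1, h2]
        calc (y*u)^2 * |T (γ+1) (5/2) (-((y*u)^2))| ≤ 1 * Tb (γ+1) (5/2) :=
              mul_le_mul hle1 hT (abs_nonneg _) (by norm_num)
          _ = Tb (γ+1) (5/2) := one_mul _
      calc |1 - (y*u)^2 * T (γ+1) (5/2) (-((y*u)^2))|
          ≤ |(1:ℝ)| + |(y*u)^2 * T (γ+1) (5/2) (-((y*u)^2))| := abs_sub _ _
        _ ≤ 1 + Tb (γ+1) (5/2) := by rw [abs_one]; linarith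
    calc (y*u)^2 * |1 - (y*u)^2 * T (γ+1) (5/2) (-((y*u)^2))|
        ≤ y * (1 + Tb (γ+1) (5/2)) := mul_le_mul h3 h5 (abs_nonneg _) (by linarith [hy.1.le])
      _ = (1 + Tb (γ+1) (5/2)) * y := mul_comm _ _
  have hg2 : Tendsto (fun y : ℝ => (y*u)^2 * T γ (3/2) (-((y*u)^2)))
      (nhdsWithin 0 (Set.Ioi 0)) (𝓝 0) := by
    apply squeeze_zero_norm' _ (hCy (Tb γ (3/2)))
    filter_upwards [hmem] with y hy
    obtain ⟨h1, h3, h4, h2⟩ := hyfacts y hy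
    have hT := abs_T_le γ (3/2) _ h4
    rw [Real.norm_eq_abs, abs_mul, abs_pow, sq_abs]
    calc (y*u)^2 * |T γ (3/2) (-((y*u)^2))| ≤ y * Tb γ (3/2) :=
          mul_le_mul h3 hT (abs_nonneg _) hy.1.le
      _ = Tb γ (3/2) * y := mul_comm _ _
  have hg3 : Tendsto (fun y : ℝ =>
        (y*u) * (T (γ-1/2) (-(1/2)) (-((y*u)^2)) - T (γ-1/2) (1/2) (-((y*u)^2))))
      (nhdsWithin 0 (Set.Ioi 0)) (𝓝 0) := by
    apply squeeze_zero_norm' _ (hCy (Tb (γ-1/2) (-(1/2)) + Tb (γ-1/2) (1/2)))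
    filter_upwards [hmem] with y hy
    obtain ⟨h1, h3, h4, h2⟩ := hyfacts y hy
    have hT3 := abs_T_le (γ-1/2) (-(1/2)) _ h4
    have hT4 := abs_T_le (γ-1/2) (1/2) _ h4
    rw [Real.norm_eq_abs, abs_mul, abs_of_nonneg h1]
    have h5 : |T (γ-1/2) (-(1/2)) (-((y*u)^2)) - T (γ-1/2) (1/2) (-((y*u)^2))|
        ≤ Tb (γ-1/2) (-(1/2)) + Tb (γ-1/2) (1/2) := by
      calc |T (γ-1/2) (-(1/2)) (-((y*u)^2)) - T (γ-1/2) (1/2) (-((y*u)^2))|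
          ≤ |T (γ-1/2) (-(1/2)) (-((y*u)^2))| + |T (γ-1/2) (1/2) (-((y*u)^2))| := abs_sub _ _
        _ ≤ Tb (γ-1/2) (-(1/2)) + Tb (γ-1/2) (1/2) := add_le_add hT3 hT4
    calc (y*u) * |T (γ-1/2) (-(1/2)) (-((y*u)^2)) - T (γ-1/2) (1/2) (-((y*u)^2))|
        ≤ y * (Tb (γ-1/2) (-(1/2)) + Tb (γ-1/2) (1/2)) :=
          mul_le_mul h2 h5 (abs_nonneg _) hy.1.le
      _ = (Tb (γ-1/2) (-(1/2)) + Tb (γ-1/2) (1/2)) * y := mul_comm _ _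
  have htend : Tendsto (fun y : ℝ => Real.Gamma (3/2 - γ) / Real.Gamma (3/2)
      + ((-2*γ*(Real.Gamma (3/2 - γ)/Real.Gamma (5/2))) *
          ((y*u)^2 * (1 - (y*u)^2 * T (γ+1) (5/2) (-((y*u)^2))))
        + (-(Real.Gamma (3/2 - γ)/Real.Gamma (3/2))) * ((y*u)^2 * T γ (3/2) (-((y*u)^2)))
        + (γ * Real.Gamma (-γ) / Real.sqrt π) *
          ((y*u) * (T (γ-1/2) (-(1/2)) (-((y*u)^2)) - T (γ-1/2) (1/2) (-((y*u)^2))))))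
      (nhdsWithin 0 (Set.Ioi 0))
      (𝓝 (Real.Gamma (3/2 - γ) / Real.Gamma (3/2))) := by
    have h := (tendsto_const_nhds
        (x := Real.Gamma (3/2 - γ) / Real.Gamma (3/2))
        (f := nhdsWithin (0:ℝ) (Set.Ioi 0))).add
      (((hg1.const_mul (-2*γ*(Real.Gamma (3/2 - γ)/Real.Gamma (5/2)))).add
        (hg2.const_mul (-(Real.Gamma (3/2 - γ)/Real.Gamma (3/2))))).add
        (hg3.const_mul (γ * Real.Gamma (-γ) / Real.sqrt π)))
    simpa using h
  refine htend.congr' ?_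
  filter_upwards [self_mem_nhdsWithin] with y hy
  have hy0 : 0 < y := hy
  have hzeq : y ^ 2 * (2 * α - 1) / 2 = -((y*u)^2) := by
    rw [mul_pow, hu2]; ring
  have hw : (0:ℝ) < y * u := by positivity
  have hr1 : ((y*u)^2 : ℝ) ^ (-(3/2) : ℝ) = ((y*u)^3)⁻¹ := by
    rw [← Real.rpow_natCast (y*u) 2, ← Real.rpow_mul hw.le, ← Real.rpow_natCast (y*u) 3,
      ← Real.rpow_neg hw.le]
    norm_num
  have hr2 : ((y*u)^2 : ℝ) ^ (-(1/2) : ℝ) = (y*u)⁻¹ := by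
    rw [← Real.rpow_natCast (y*u) 2, ← Real.rpow_mul hw.le, ← Real.rpow_neg_one (y*u)]
    norm_num
  rw [hzeq, W, W,
    show (5:ℝ)/2 - (γ+1) = 3/2 - γ by ring,
    show (1:ℝ) - (γ+1) = -γ by ring,
    show (2:ℝ) - 5/2 = -(1/2) by norm_num,
    show γ + 1 - 5/2 + 1 = γ - 1/2 by ring,
    show (1:ℝ) - 5/2 = -(3/2) by norm_num,
    show (2:ℝ) - 3/2 = 1/2 by norm_num,
    show γ - 3/2 + 1 = γ - 1/2 by ring,
    show (1:ℝ) - 3/2 = -(1/2) by norm_num,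
    neg_neg, hr1, hr2, hΓm, hΓγ, Real.Gamma_one_half_eq]
  simp only [M_eq]
  rw [hαu]
  field_simp
  ring
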